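/- The number of elliptic curves y² = x³ + Ax + B with A, B ∈ ℤ, 4A³ + 27B² ≠ 0, not divisible (i.e., no prime p with p⁴ | A and p⁶ | B), and height max(|4A³|, |27B²|) ≤ H, is asymptotic to κ H^{5/6} as H → ∞, where κ = 2^{4/3} · 3^{-3/2} / ζ(10). -/

import Mathlib

open Filter Finset

namespace ECAux

noncomputable section

def hgt (p : ℤ × ℤ) : ℝ := max |4 * (p.1 : ℝ) ^ 3| |27 * (p.2 : ℝ) ^ 2|

def Dok (p : ℤ × ℤ) : Prop := 4 * p.1 ^ 3 + 27 * p.2 ^ 2 ≠ 0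

def Mini (p : ℤ × ℤ) : Prop :=
  ¬∃ q : ℕ, q.Prime ∧ (q : ℤ) ^ 4 ∣ p.1 ∧ (q : ℤ) ^ 6 ∣ p.2

def Nset (x : ℝ) : Set (ℤ × ℤ) := {p | Dok p ∧ Mini p ∧ hgt p ≤ x}

def ax (x : ℝ) : ℤ := ⌊(x / 4) ^ ((1 : ℝ) / 3)⌋
def bx (x : ℝ) : ℤ := ⌊(x / 27) ^ ((1 : ℝ) / 2)⌋

def Sfin (x : ℝ) : Finset (ℤ × ℤ) :=
  (Finset.Icc (-ax x) (ax x) ×ˢ Finset.Icc (-bx x) (bx x)).filter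
    (fun p => 4 * p.1 ^ 3 + 27 * p.2 ^ 2 ≠ 0)

def sc (x : ℝ) : ℕ := (Sfin x).card

lemma pow_le_rpow_iff {u t : ℝ} (hu : 0 ≤ u) (ht : 0 ≤ t) (n : ℕ) (hn : n ≠ 0) :
    u ≤ t ^ ((1 : ℝ) / n) ↔ u ^ n ≤ t := by
  rw [← pow_le_pow_iff_left₀ hu (Real.rpow_nonneg ht _) hn]
  congr! 1
  rw [← Real.rpow_natCast (t ^ ((1:ℝ)/n)) n, ← Real.rpow_mul ht]
  rw [one_div, inv_mul_cancel₀ (by exact_mod_cast hn), Real.rpow_one]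

lemma rpow_one_div_pow {t : ℝ} (ht : 0 ≤ t) (n : ℕ) (hn : n ≠ 0) :
    (t ^ ((1 : ℝ) / n)) ^ n = t := by
  rw [← Real.rpow_natCast (t ^ ((1:ℝ)/n)) n, ← Real.rpow_mul ht]
  rw [one_div, inv_mul_cancel₀ (by exact_mod_cast hn), Real.rpow_one]

lemma le_rpow3_iff {u t : ℝ} (hu : 0 ≤ u) (ht : 0 ≤ t) :
    u ≤ t ^ ((1 : ℝ) / 3) ↔ u ^ 3 ≤ t := by
  have := pow_le_rpow_iff hu ht 3 (by norm_num)
  norm_num at this; exact this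

lemma le_rpow2_iff {u t : ℝ} (hu : 0 ≤ u) (ht : 0 ≤ t) :
    u ≤ t ^ ((1 : ℝ) / 2) ↔ u ^ 2 ≤ t := by
  have := pow_le_rpow_iff hu ht 2 (by norm_num)
  norm_num at this; exact this

lemma mem_Sfin_iff {x : ℝ} (hx : 0 ≤ x) {p : ℤ × ℤ} :
    p ∈ Sfin x ↔ Dok p ∧ hgt p ≤ x := by
  have h4 : (0:ℝ) ≤ x / 4 := by linarith
  have h27 : (0:ℝ) ≤ x / 27 := by linarith
  constructor
  · rintro hp
    simp only [Sfin, Finset.mem_filter, Finset.mem_product, Finset.mem_Icc] at hp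
    obtain ⟨⟨⟨ha1, ha2⟩, hb1, hb2⟩, hD⟩ := hp
    refine ⟨hD, ?_⟩
    have hA : |p.1| ≤ ax x := abs_le.mpr ⟨ha1, ha2⟩
    have hB : |p.2| ≤ bx x := abs_le.mpr ⟨hb1, hb2⟩
    have hA' : (|p.1| : ℝ) ≤ (x/4) ^ ((1:ℝ)/3) := by
      exact_mod_cast (Int.le_floor.mp hA)
    have hB' : (|p.2| : ℝ) ≤ (x/27) ^ ((1:ℝ)/2) := by
      exact_mod_cast (Int.le_floor.mp hB)
    rw [le_rpow3_iff (by positivity) h4] at hA'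
    rw [le_rpow2_iff (by positivity) h27] at hB'
    have e1 : |4 * (p.1:ℝ) ^ 3| = 4 * |(p.1:ℝ)| ^ 3 := by
      rw [abs_mul, abs_pow]; norm_num
    have e2 : |27 * (p.2:ℝ) ^ 2| = 27 * |(p.2:ℝ)| ^ 2 := by
      rw [abs_mul, abs_pow]; norm_num
    push_cast at hA' hB'
    rw [hgt, max_le_iff, e1, e2]
    constructor <;> nlinarith
  · rintro ⟨hD, hh⟩
    rw [hgt, max_le_iff] at hh
    obtain ⟨h1, h2⟩ := hh
    simp only [Sfin, Finset.mem_filter, Finset.mem_product, Finset.mem_Icc]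
    refine ⟨⟨?_, ?_⟩, hD⟩
    · have e1 : |4 * (p.1:ℝ) ^ 3| = 4 * |(p.1:ℝ)| ^ 3 := by
        rw [abs_mul, abs_pow]; norm_num
      rw [e1] at h1
      have : |(p.1 : ℝ)| ^ 3 ≤ x / 4 := by linarith
      rw [← le_rpow3_iff (by positivity) h4] at this
      have hfl : |p.1| ≤ ax x := Int.le_floor.mpr (by exact_mod_cast this)
      exact ⟨neg_le_of_abs_le hfl, le_of_abs_le hfl⟩
    · have e2 : |27 * (p.2:ℝ) ^ 2| = 27 * |(p.2:ℝ)| ^ 2 := by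
        rw [abs_mul, abs_pow]; norm_num
      rw [e2] at h2
      have : |(p.2 : ℝ)| ^ 2 ≤ x / 27 := by linarith
      rw [← le_rpow2_iff (by positivity) h27] at this
      have hfl : |p.2| ≤ bx x := Int.le_floor.mpr (by exact_mod_cast this)
      exact ⟨neg_le_of_abs_le hfl, le_of_abs_le hfl⟩

lemma card_Icc_sym {a : ℤ} (ha : 0 ≤ a) : (((Finset.Icc (-a) a).card : ℝ)) = 2*(a:ℝ)+1 := by
  rw [Int.card_Icc]
  have h : a + 1 - (-a) = 2*a+1 := by ring
  rw [h]
  have h2 : ((2*a+1).toNat : ℤ) = 2*a+1 := Int.toNat_of_nonneg (by linarith)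
  have h3 : (((2*a+1).toNat : ℤ) : ℝ) = ((2*a+1 : ℤ) : ℝ) := by rw [h2]
  push_cast at h3 ⊢
  linarith

lemma ax_nonneg {x : ℝ} (hx : 0 ≤ x) : 0 ≤ ax x :=
  Int.floor_nonneg.mpr (Real.rpow_nonneg (by linarith) _)

lemma bx_nonneg {x : ℝ} (hx : 0 ≤ x) : 0 ≤ bx x :=
  Int.floor_nonneg.mpr (Real.rpow_nonneg (by linarith) _)

lemma sc_bounds {x : ℝ} (hx : 0 ≤ x) :
    (2*(ax x:ℝ)+1) * (2*(bx x:ℝ)+1) - (2*(bx x:ℝ)+1) ≤ (sc x : ℝ) ∧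
      (sc x : ℝ) ≤ (2*(ax x:ℝ)+1) * (2*(bx x:ℝ)+1) := by
  classical
  set full := Finset.Icc (-ax x) (ax x) ×ˢ Finset.Icc (-bx x) (bx x) with hfull
  have hcardfull : ((full.card : ℝ)) = (2*(ax x:ℝ)+1) * (2*(bx x:ℝ)+1) := by
    rw [hfull, Finset.card_product]
    push_cast
    rw [card_Icc_sym (ax_nonneg hx), card_Icc_sym (bx_nonneg hx)]
  have hsplit : sc x + (full.filter (fun p : ℤ × ℤ =>
      ¬ (4 * p.1 ^ 3 + 27 * p.2 ^ 2 ≠ 0))).card = full.card := by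
    rw [sc, Sfin, ← hfull]
    exact Finset.card_filter_add_card_filter_not _
  have hbad : ((full.filter (fun p : ℤ × ℤ =>
      ¬ (4 * p.1 ^ 3 + 27 * p.2 ^ 2 ≠ 0))).card : ℝ) ≤ 2*(bx x:ℝ)+1 := by
    have hle : (full.filter (fun p : ℤ × ℤ =>
        ¬ (4 * p.1 ^ 3 + 27 * p.2 ^ 2 ≠ 0))).card
        ≤ (Finset.Icc (-bx x) (bx x)).card := by
      apply Finset.card_le_card_of_injOn Prod.snd
      · intro p hp
        simp only [hfull, Finset.mem_coe, Finset.mem_filter, Finset.mem_product] at hp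
        exact hp.1.2
      · intro p hp q hq hpq
        simp only [hfull, Finset.coe_filter, Set.mem_setOf_eq, Finset.mem_product,
          not_not] at hp hq
        have h3 : p.1 ^ 3 = q.1 ^ 3 := by
          have : p.2 ^ 2 = q.2 ^ 2 := by rw [hpq]
          nlinarith [hp.2, hq.2]
        have h1 : p.1 = q.1 := by
          have hodd : Odd 3 := ⟨1, by norm_num⟩
          exact (Odd.strictMono_pow (R := ℤ) hodd).injective h3
        exact Prod.ext h1 hpq
    calc ((full.filter _).card : ℝ) ≤ ((Finset.Icc (-bx x) (bx x)).card : ℝ) := by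
          exact_mod_cast hle
    _ = 2*(bx x:ℝ)+1 := card_Icc_sym (bx_nonneg hx)
  have hsplit' : (sc x : ℝ) = (full.card : ℝ) - ((full.filter (fun p : ℤ × ℤ =>
      ¬ (4 * p.1 ^ 3 + 27 * p.2 ^ 2 ≠ 0))).card : ℝ) := by
    have := congrArg (fun n : ℕ => (n : ℝ)) hsplit
    push_cast at this
    linarith
  constructor
  · rw [hsplit', hcardfull]; linarith
  · rw [hsplit', hcardfull]
    have : (0:ℝ) ≤ ((full.filter (fun p : ℤ × ℤ =>
      ¬ (4 * p.1 ^ 3 + 27 * p.2 ^ 2 ≠ 0))).card : ℝ) := by positivity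
    linarith

lemma floor_rpow_ratio (c e : ℝ) (hc : 0 < c) (he : 0 < e) :
    Tendsto (fun x : ℝ => ((⌊(x / c) ^ e⌋ : ℤ) : ℝ) / x ^ e) atTop
      (nhds ((1/c) ^ e)) := by
  have h0 : Tendsto (fun x : ℝ => (1/c)^e - x ^ (-e)) atTop (nhds ((1/c)^e)) := by
    have := tendsto_rpow_neg_atTop he
    simpa using (tendsto_const_nhds (x := (1/c)^e)).sub this
  apply tendsto_of_tendsto_of_tendsto_of_le_of_le' h0 tendsto_const_nhds
  · filter_upwards [eventually_gt_atTop (0:ℝ)] with x hx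
    have hxe : (0:ℝ) < x ^ e := Real.rpow_pos_of_pos hx e
    have hsplit : (x / c) ^ e = x ^ e * (1/c) ^ e := by
      rw [← Real.mul_rpow (le_of_lt hx) (by positivity)]
      ring_nf
    have hfl : (x/c)^e - 1 < (⌊(x / c) ^ e⌋ : ℝ) := Int.sub_one_lt_floor _
    rw [sub_le_iff_le_add, div_add' _ _ _ (ne_of_gt hxe), le_div_iff₀ hxe]
    have hneg : x ^ (-e) * x ^ e = 1 := by
      rw [← Real.rpow_add hx]; simp
    calc (1/c)^e * x ^ e = (x/c)^e := by rw [hsplit]; ring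
    _ ≤ (⌊(x / c) ^ e⌋ : ℝ) + 1 := by linarith
    _ ≤ (⌊(x/c)^e⌋ + x ^ (-e) * x ^ e) := by rw [hneg]
    _ = _ := by ring
  · filter_upwards [eventually_gt_atTop (0:ℝ)] with x hx
    have hxe : (0:ℝ) < x ^ e := Real.rpow_pos_of_pos hx e
    rw [div_le_iff₀ hxe]
    have hsplit : (x / c) ^ e = x ^ e * (1/c) ^ e := by
      rw [← Real.mul_rpow (le_of_lt hx) (by positivity)]
      ring_nf
    calc (⌊(x / c) ^ e⌋ : ℝ) ≤ (x/c)^e := Int.floor_le _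
    _ = (1/c)^e * x ^ e := by rw [hsplit]; ring

lemma const_eval : (2 * ((1:ℝ)/4) ^ ((1:ℝ)/3)) * (2 * ((1:ℝ)/27) ^ ((1:ℝ)/2))
    = (2:ℝ) ^ ((4:ℝ)/3) * (3:ℝ) ^ (-(3:ℝ)/2) := by
  have h2 : (0:ℝ) < 2 := by norm_num
  have h3 : (0:ℝ) < 3 := by norm_num
  have e4 : ((1:ℝ)/4) = (2:ℝ) ^ (-2:ℝ) := by
    rw [Real.rpow_neg h2.le, show ((2:ℝ)^(2:ℝ)) = 4 by
      rw [show (2:ℝ) = ((2:ℕ):ℝ) by norm_num, Real.rpow_natCast]; norm_num]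
    norm_num
  have e27 : ((1:ℝ)/27) = (3:ℝ) ^ (-3:ℝ) := by
    rw [Real.rpow_neg h3.le, show ((3:ℝ)^(3:ℝ)) = 27 by
      rw [show (3:ℝ) = ((3:ℕ):ℝ) by norm_num, Real.rpow_natCast]; norm_num]
    norm_num
  rw [e4, e27, ← Real.rpow_mul h2.le, ← Real.rpow_mul h3.le]
  have e2 : (4:ℝ) = (2:ℝ) ^ (2:ℝ) := by
    rw [show (2:ℝ) = ((2:ℕ):ℝ) by norm_num, Real.rpow_natCast]; norm_num
  have h24 : (2:ℝ) ^ ((4:ℝ)/3) = (2:ℝ)^(2:ℝ) * (2:ℝ)^(-2*((1:ℝ)/3)) := by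
    rw [← Real.rpow_add h2]; norm_num
  rw [h24, ← e2]
  have h32 : (-3) * ((1:ℝ)/2) = -(3:ℝ)/2 := by norm_num
  rw [h32]; ring

lemma tendsto_invpow (e : ℝ) (he : 0 < e) :
    Tendsto (fun x : ℝ => 1 / x ^ e) atTop (nhds 0) := by
  apply (tendsto_rpow_neg_atTop he).congr'
  filter_upwards [eventually_gt_atTop (0:ℝ)] with x hx
  rw [Real.rpow_neg hx.le, one_div]

lemma tendsto_A :
    Tendsto (fun x : ℝ => (2*(ax x:ℝ)+1) / x ^ ((1:ℝ)/3)) atTop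
      (nhds (2 * ((1:ℝ)/4) ^ ((1:ℝ)/3))) := by
  have h1 := (floor_rpow_ratio 4 ((1:ℝ)/3) (by norm_num) (by norm_num)).const_mul 2
  have h2 := tendsto_invpow ((1:ℝ)/3) (by norm_num)
  have h3 := h1.add h2
  rw [add_zero] at h3
  apply h3.congr
  intro x
  simp only [ax]
  ring

lemma tendsto_B :
    Tendsto (fun x : ℝ => (2*(bx x:ℝ)+1) / x ^ ((1:ℝ)/2)) atTop
      (nhds (2 * ((1:ℝ)/27) ^ ((1:ℝ)/2))) := by
  have h1 := (floor_rpow_ratio 27 ((1:ℝ)/2) (by norm_num) (by norm_num)).const_mul 2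
  have h2 := tendsto_invpow ((1:ℝ)/2) (by norm_num)
  have h3 := h1.add h2
  rw [add_zero] at h3
  apply h3.congr
  intro x
  simp only [bx]
  ring

lemma tendsto_AB :
    Tendsto (fun x : ℝ => (2*(ax x:ℝ)+1) * (2*(bx x:ℝ)+1) / x ^ ((5:ℝ)/6)) atTop
      (nhds ((2:ℝ) ^ ((4:ℝ)/3) * (3:ℝ) ^ (-(3:ℝ)/2))) := by
  rw [← const_eval]
  apply (tendsto_A.mul tendsto_B).congr'
  filter_upwards [eventually_gt_atTop (0:ℝ)] with x hx
  rw [div_mul_div_comm, ← Real.rpow_add hx]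
  norm_num

lemma tendsto_B0 :
    Tendsto (fun x : ℝ => (2*(bx x:ℝ)+1) / x ^ ((5:ℝ)/6)) atTop (nhds 0) := by
  have h := tendsto_B.mul (tendsto_invpow ((1:ℝ)/3) (by norm_num))
  rw [mul_zero] at h
  apply h.congr'
  filter_upwards [eventually_gt_atTop (0:ℝ)] with x hx
  rw [div_mul_div_comm, mul_one, ← Real.rpow_add hx]
  norm_num

/-- main box-count asymptotic -/
lemma tendsto_sc :
    Tendsto (fun x : ℝ => (sc x : ℝ) / x ^ ((5:ℝ)/6)) atTop
      (nhds ((2:ℝ) ^ ((4:ℝ)/3) * (3:ℝ) ^ (-(3:ℝ)/2))) := by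
  have hlow := tendsto_AB.sub tendsto_B0
  rw [sub_zero] at hlow
  apply tendsto_of_tendsto_of_tendsto_of_le_of_le' hlow tendsto_AB
  · filter_upwards [eventually_gt_atTop (0:ℝ)] with x hx
    have h := (sc_bounds hx.le).1
    have hxe : (0:ℝ) < x ^ ((5:ℝ)/6) := Real.rpow_pos_of_pos hx _
    rw [← sub_div]
    exact div_le_div_of_nonneg_right h hxe.le
  · filter_upwards [eventually_gt_atTop (0:ℝ)] with x hx
    have h := (sc_bounds hx.le).2
    have hxe : (0:ℝ) < x ^ ((5:ℝ)/6) := Real.rpow_pos_of_pos hx _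
    exact div_le_div_of_nonneg_right h hxe.le

lemma hgt_ge {p : ℤ × ℤ} (hD : Dok p) : 4 ≤ hgt p := by
  rcases eq_or_ne p.1 0 with h | h
  · have hb : p.2 ≠ 0 := by
      intro hb
      apply hD
      rw [h, hb]; ring
    have h1 : (1:ℝ) ≤ |(p.2:ℝ)| := by
      rw [← Int.cast_abs]
      exact_mod_cast Int.one_le_abs hb
    refine le_trans ?_ (le_max_right _ _)
    have : |27 * (p.2:ℝ) ^ 2| = 27 * |(p.2:ℝ)| ^ 2 := by
      rw [abs_mul, abs_pow]; norm_num
    rw [this]; nlinarith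
  · have h1' : (1:ℝ) ≤ |(p.1:ℝ)| := by
      rw [← Int.cast_abs]
      exact_mod_cast Int.one_le_abs h
    refine le_trans ?_ (le_max_left _ _)
    have : |4 * (p.1:ℝ) ^ 3| = 4 * |(p.1:ℝ)| ^ 3 := by
      rw [abs_mul, abs_pow]; norm_num
    rw [this]
    have h2 : (1:ℝ)^3 ≤ |(p.1:ℝ)|^3 := pow_le_pow_left₀ (by norm_num) h1' 3
    norm_num at h2; linarith

lemma sc_eq_zero {x : ℝ} (hx : 0 ≤ x) (hx4 : x < 4) : sc x = 0 := by
  rw [sc, Finset.card_eq_zero]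
  rw [Finset.eq_empty_iff_forall_notMem]
  intro p hp
  rw [mem_Sfin_iff hx] at hp
  have := hgt_ge hp.1
  linarith [hp.2]

/-- uniform upper bound -/
lemma sc_le_bound {x : ℝ} (hx : 0 ≤ x) : (sc x : ℝ) ≤ 15 * x ^ ((5:ℝ)/6) := by
  rcases lt_or_ge x 4 with h4 | h4
  · rw [sc_eq_zero hx h4]
    simp only [Nat.cast_zero]
    positivity
  · have hx0 : (0:ℝ) < x := by linarith
    set t := (x/4) ^ ((1:ℝ)/3) with hT
    set u := (x/27) ^ ((1:ℝ)/2) with hU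
    have ht0 : 0 ≤ t := Real.rpow_nonneg (by linarith) _
    have hu0 : 0 ≤ u := Real.rpow_nonneg (by linarith) _
    have ht3 : t ^ 3 = x / 4 := rpow_one_div_pow (by linarith) 3 (by norm_num)
    have hu2 : u ^ 2 = x / 27 := rpow_one_div_pow (by linarith) 2 (by norm_num)
    have ht1 : 1 ≤ t := by nlinarith [ht3, ht0, h4, sq_nonneg t, sq_nonneg (t-1), sq_nonneg (t+1)]
    have hu3 : 1 ≤ 3 * u := by nlinarith [hu2, hu0, h4, sq_nonneg (u - 1/3), sq_nonneg (u + 1/3)]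
    have ha : (ax x : ℝ) ≤ t := Int.floor_le _
    have hb : (bx x : ℝ) ≤ u := Int.floor_le _
    have hA3 : 2*(ax x:ℝ)+1 ≤ 3 * t := by linarith
    have hB5 : 2*(bx x:ℝ)+1 ≤ 5 * u := by linarith
    have hA0 : 0 ≤ 2*(ax x:ℝ)+1 := by
      have := ax_nonneg hx
      have : (0:ℝ) ≤ (ax x : ℝ) := by exact_mod_cast this
      linarith
    have hB0 : 0 ≤ 2*(bx x:ℝ)+1 := by
      have := bx_nonneg hx
      have : (0:ℝ) ≤ (bx x : ℝ) := by exact_mod_cast this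
      linarith
    have hprod : (sc x : ℝ) ≤ 15 * (t * u) := by
      have h1 := (sc_bounds hx).2
      nlinarith
    have htx : t ≤ x ^ ((1:ℝ)/3) :=
      Real.rpow_le_rpow (by linarith) (div_le_self hx (by norm_num)) (by norm_num)
    have hux : u ≤ x ^ ((1:ℝ)/2) :=
      Real.rpow_le_rpow (by linarith) (div_le_self hx (by norm_num)) (by norm_num)
    have hxx : x ^ ((1:ℝ)/3) * x ^ ((1:ℝ)/2) = x ^ ((5:ℝ)/6) := by
      rw [← Real.rpow_add hx0]; norm_num
    have : t * u ≤ x ^ ((5:ℝ)/6) := by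
      rw [← hxx]
      apply mul_le_mul htx hux hu0 (Real.rpow_nonneg hx0.le _)
    linarith

/-! ### Arithmetic part -/

def P (p : ℤ × ℤ) (d : ℕ) : Prop := (d:ℤ)^4 ∣ p.1 ∧ (d:ℤ)^6 ∣ p.2

instance (p : ℤ × ℤ) : DecidablePred (P p) := fun _ => instDecidableAnd

def bnd (p : ℤ × ℤ) : ℕ := p.1.natAbs + p.2.natAbs

def g (p : ℤ × ℤ) : ℕ := Nat.findGreatest (P p) (bnd p)

lemma ne_zero_of_Dok {p : ℤ × ℤ} (hD : Dok p) : p.1 ≠ 0 ∨ p.2 ≠ 0 := by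
  by_contra h
  push_neg at h
  exact hD (by rw [h.1, h.2]; ring)

lemma P_le {p : ℤ × ℤ} (hD : Dok p) {d : ℕ} (hP : P p d) : d ≤ bnd p := by
  rcases ne_zero_of_Dok hD with h | h
  · have h1 : d^4 ∣ p.1.natAbs := by
      have hh := hP.1
      rw [← Int.natAbs_dvd_natAbs] at hh
      simpa [Int.natAbs_pow] using hh
    have h2 : d^4 ≤ p.1.natAbs := Nat.le_of_dvd (Int.natAbs_pos.mpr h) h1
    have h3 : d ≤ d^4 := Nat.le_self_pow (by norm_num) d
    calc d ≤ d^4 := h3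
    _ ≤ p.1.natAbs := h2
    _ ≤ bnd p := Nat.le_add_right _ _
  · have h1 : d^6 ∣ p.2.natAbs := by
      have hh := hP.2
      rw [← Int.natAbs_dvd_natAbs] at hh
      simpa [Int.natAbs_pow] using hh
    have h2 : d^6 ≤ p.2.natAbs := Nat.le_of_dvd (Int.natAbs_pos.mpr h) h1
    have h3 : d ≤ d^6 := Nat.le_self_pow (by norm_num) d
    calc d ≤ d^6 := h3
    _ ≤ p.2.natAbs := h2
    _ ≤ bnd p := Nat.le_add_left _ _

lemma P_one (p : ℤ × ℤ) : P p 1 := by constructor <;> simp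

lemma bnd_pos {p : ℤ × ℤ} (hD : Dok p) : 1 ≤ bnd p := by
  rcases ne_zero_of_Dok hD with h | h
  · have := Int.natAbs_pos.mpr h
    unfold bnd; omega
  · have := Int.natAbs_pos.mpr h
    unfold bnd; omega

lemma g_pos {p : ℤ × ℤ} (hD : Dok p) : 1 ≤ g p :=
  Nat.le_findGreatest (bnd_pos hD) (P_one p)

lemma P_g {p : ℤ × ℤ} (hD : Dok p) : P p (g p) :=
  Nat.findGreatest_spec (bnd_pos hD) (P_one p)

lemma lcm_pow {a b : ℕ} (ha : a ≠ 0) (hb : b ≠ 0) (n : ℕ) :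
    Nat.lcm a b ^ n = Nat.lcm (a^n) (b^n) := by
  rcases Nat.eq_zero_or_pos n with rfl | hn
  · simp
  apply Nat.eq_of_factorization_eq
  · exact pow_ne_zero _ (Nat.lcm_ne_zero ha hb)
  · exact Nat.lcm_ne_zero (pow_ne_zero _ ha) (pow_ne_zero _ hb)
  intro q
  rw [Nat.factorization_pow, Nat.factorization_lcm ha hb,
    Nat.factorization_lcm (pow_ne_zero _ ha) (pow_ne_zero _ hb),
    Nat.factorization_pow, Nat.factorization_pow]
  simp only [Finsupp.smul_apply, Finsupp.sup_apply, smul_eq_mul]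
  rcases le_total (a.factorization q) (b.factorization q) with h | h
  · rw [sup_of_le_right h, sup_of_le_right (Nat.mul_le_mul_left n h)]
  · rw [sup_of_le_left h, sup_of_le_left (Nat.mul_le_mul_left n h)]

lemma P_dvd_mono {p : ℤ × ℤ} {d e : ℕ} (hde : d ∣ e) (hP : P p e) : P p d :=
  ⟨dvd_trans (by exact_mod_cast pow_dvd_pow_of_dvd (Int.natCast_dvd_natCast.mpr hde) 4) hP.1,
   dvd_trans (by exact_mod_cast pow_dvd_pow_of_dvd (Int.natCast_dvd_natCast.mpr hde) 6) hP.2⟩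

lemma P_iff_dvd_g {p : ℤ × ℤ} (hD : Dok p) {d : ℕ} (hd : 1 ≤ d) :
    P p d ↔ d ∣ g p := by
  constructor
  · intro hP
    have hg := P_g hD
    have hd0 : d ≠ 0 := by omega
    have hg0 : g p ≠ 0 := by have := g_pos hD; omega
    set l := Nat.lcm d (g p) with hl
    have hl0 : l ≠ 0 := Nat.lcm_ne_zero hd0 hg0
    have hPl : P p l := by
      constructor
      · have h1 : ((d:ℤ)^4) ∣ p.1 := hP.1
        have h2 : (((g p):ℤ)^4) ∣ p.1 := hg.1
        have h3 : ((Nat.lcm (d^4) ((g p)^4) : ℕ) : ℤ) ∣ p.1 := by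
          exact Int.natCast_dvd.mpr (Nat.lcm_dvd (Int.natCast_dvd.mp (by exact_mod_cast h1 : ((d^4:ℕ):ℤ) ∣ p.1))
            (Int.natCast_dvd.mp (by exact_mod_cast h2 : (((g p)^4:ℕ):ℤ) ∣ p.1)))
        have h4 : ((l:ℤ)^4) = ((Nat.lcm (d^4) ((g p)^4) : ℕ) : ℤ) := by
          rw [← lcm_pow hd0 hg0]; push_cast; ring
        rw [h4]; exact h3
      · have h1 : ((d:ℤ)^6) ∣ p.2 := hP.2
        have h2 : (((g p):ℤ)^6) ∣ p.2 := hg.2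
        have h3 : ((Nat.lcm (d^6) ((g p)^6) : ℕ) : ℤ) ∣ p.2 := by
          exact Int.natCast_dvd.mpr (Nat.lcm_dvd (Int.natCast_dvd.mp (by exact_mod_cast h1 : ((d^6:ℕ):ℤ) ∣ p.2))
            (Int.natCast_dvd.mp (by exact_mod_cast h2 : (((g p)^6:ℕ):ℤ) ∣ p.2)))
        have h4 : ((l:ℤ)^6) = ((Nat.lcm (d^6) ((g p)^6) : ℕ) : ℤ) := by
          rw [← lcm_pow hd0 hg0]; push_cast; ring
        rw [h4]; exact h3
    have hle : l ≤ g p := Nat.le_findGreatest (P_le hD hPl) hPl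
    have hge : g p ≤ l := Nat.le_of_dvd (Nat.pos_of_ne_zero hl0) (Nat.dvd_lcm_right _ _)
    have : l = g p := le_antisymm hle hge
    rw [← this]
    exact Nat.dvd_lcm_left _ _
  · intro hdvd
    exact P_dvd_mono hdvd (P_g hD)

lemma mini_iff_g_eq_one {p : ℤ × ℤ} (hD : Dok p) : Mini p ↔ g p = 1 := by
  constructor
  · intro hM
    by_contra hne
    obtain ⟨q, hq, hqd⟩ := Nat.exists_prime_and_dvd hne
    have hP := P_dvd_mono hqd (P_g hD)
    exact hM ⟨q, hq, hP.1, hP.2⟩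
  · rintro h1 ⟨q, hq, h4, h6⟩
    have hdvd : q ∣ g p := (P_iff_dvd_g hD hq.one_lt.le).mp ⟨h4, h6⟩
    rw [h1] at hdvd
    exact hq.one_lt.ne' (Nat.dvd_one.mp hdvd)

open ArithmeticFunction in
lemma moebius_sum_divisors (n : ℕ) :
    ∑ d ∈ n.divisors, moebius d = if n = 1 then 1 else 0 := by
  have h := congrArg (fun f : ArithmeticFunction ℤ => f n) moebius_mul_coe_zeta
  simp only [ArithmeticFunction.coe_mul_zeta_apply, ArithmeticFunction.one_apply] at h
  exact h

lemma hgt_scale (d : ℕ) (p : ℤ × ℤ) :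
    hgt ((d:ℤ)^4 * p.1, (d:ℤ)^6 * p.2) = (d:ℝ)^12 * hgt p := by
  unfold hgt
  push_cast
  have e1 : 4 * ((d:ℝ)^4 * (p.1:ℝ))^3 = (d:ℝ)^12 * (4 * (p.1:ℝ)^3) := by ring
  have e2 : 27 * ((d:ℝ)^6 * (p.2:ℝ))^2 = (d:ℝ)^12 * (27 * (p.2:ℝ)^2) := by ring
  rw [e1, e2, abs_mul ((d:ℝ)^12) (4 * (p.1:ℝ)^3), abs_mul ((d:ℝ)^12) (27 * (p.2:ℝ)^2),
    abs_of_nonneg (by positivity : (0:ℝ) ≤ (d:ℝ)^12)]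
  exact (mul_max_of_nonneg _ _ (by positivity : (0:ℝ) ≤ (d:ℝ)^12)).symm

lemma Dok_scale {d : ℕ} (hd : 1 ≤ d) (p : ℤ × ℤ) :
    Dok ((d:ℤ)^4 * p.1, (d:ℤ)^6 * p.2) ↔ Dok p := by
  unfold Dok
  have e : 4 * ((d:ℤ)^4 * p.1)^3 + 27 * ((d:ℤ)^6 * p.2)^2
      = (d:ℤ)^12 * (4 * p.1^3 + 27 * p.2^2) := by ring
  rw [e]
  have hd0 : ((d:ℤ))^12 ≠ 0 := by positivity
  simp [hd0]

lemma card_scale {x : ℝ} (hx : 0 ≤ x) {d : ℕ} (hd : 1 ≤ d) :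
    ((Sfin x).filter (fun p => P p d)).card = sc (x / (d:ℝ)^12) := by
  have hd0 : (0:ℝ) < (d:ℝ)^12 := by positivity
  have hx' : 0 ≤ x / (d:ℝ)^12 := div_nonneg hx hd0.le
  rw [sc]
  refine Finset.card_bij' (fun p _ => ((p.1 / (d:ℤ)^4, p.2 / (d:ℤ)^6) : ℤ × ℤ))
    (fun p _ => (((d:ℤ)^4 * p.1, (d:ℤ)^6 * p.2) : ℤ × ℤ)) ?_ ?_ ?_ ?_
  · intro p hp
    rw [Finset.mem_filter, mem_Sfin_iff hx] at hp
    obtain ⟨⟨hD, hh⟩, h4, h6⟩ := hp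
    rw [mem_Sfin_iff hx']
    have hrec : ((d:ℤ)^4 * (p.1 / (d:ℤ)^4), (d:ℤ)^6 * (p.2 / (d:ℤ)^6)) = p := by
      rcases p with ⟨a, b⟩
      simp only [Prod.mk.injEq]
      exact ⟨Int.mul_ediv_cancel' h4, Int.mul_ediv_cancel' h6⟩
    constructor
    · rw [← Dok_scale hd (p.1 / (d:ℤ)^4, p.2 / (d:ℤ)^6)]
      simpa [hrec] using hD
    · have := hgt_scale d (p.1 / (d:ℤ)^4, p.2 / (d:ℤ)^6)
      simp only [hrec] at this
      rw [le_div_iff₀ hd0, mul_comm, ← this]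
      exact hh
  · intro p hp
    rw [mem_Sfin_iff hx'] at hp
    rw [Finset.mem_filter, mem_Sfin_iff hx]
    refine ⟨⟨(Dok_scale hd p).mpr hp.1, ?_⟩, ⟨Dvd.intro _ rfl, Dvd.intro _ rfl⟩⟩
    rw [hgt_scale d p]
    calc (d:ℝ)^12 * hgt p ≤ (d:ℝ)^12 * (x / (d:ℝ)^12) := by
          exact mul_le_mul_of_nonneg_left hp.2 hd0.le
    _ = x := by field_simp
  · rintro ⟨a, b⟩ hp
    rw [Finset.mem_filter] at hp
    obtain ⟨_, h4, h6⟩ := hp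
    simp only [Prod.mk.injEq]
    exact ⟨Int.mul_ediv_cancel' h4, Int.mul_ediv_cancel' h6⟩
  · rintro ⟨a, b⟩ hp
    have hd4 : ((d:ℤ))^4 ≠ 0 := by positivity
    have hd6 : ((d:ℤ))^6 ≠ 0 := by positivity
    simp only [Prod.mk.injEq]
    exact ⟨Int.mul_ediv_cancel_left _ hd4, Int.mul_ediv_cancel_left _ hd6⟩

def Dx (x : ℝ) : ℕ := (ax x).toNat + (bx x).toNat

lemma mem_Sfin_P_le {x : ℝ} (hx : 0 ≤ x) {p : ℤ × ℤ} (hp : p ∈ Sfin x) {d : ℕ}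
    (hP : P p d) : d ≤ Dx x := by
  have hD : Dok p := ((mem_Sfin_iff hx).mp hp).1
  have hb := P_le hD hP
  have hmem : p ∈ (Finset.Icc (-ax x) (ax x) ×ˢ Finset.Icc (-bx x) (bx x)) :=
    Finset.mem_of_mem_filter p hp
  rw [Finset.mem_product, Finset.mem_Icc, Finset.mem_Icc] at hmem
  have h1 : p.1.natAbs ≤ (ax x).toNat := by
    have : |p.1| ≤ ax x := abs_le.mpr hmem.1
    omega
  have h2 : p.2.natAbs ≤ (bx x).toNat := by
    have : |p.2| ≤ bx x := abs_le.mpr hmem.2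
    omega
  unfold bnd at hb
  unfold Dx
  omega

def Nfin (x : ℝ) : Finset (ℤ × ℤ) :=
  @Finset.filter _ Mini (Classical.decPred _) (Sfin x)

open ArithmeticFunction in
lemma main_identity {x : ℝ} (hx : 0 ≤ x) :
    ((Nfin x).card : ℤ) =
      ∑ d ∈ Finset.Icc 1 (Dx x), moebius d * (sc (x / (d:ℝ)^12) : ℤ) := by
  classical
  have step1 : ∀ d ∈ Finset.Icc 1 (Dx x),
      moebius d * (sc (x / (d:ℝ)^12) : ℤ)
        = ∑ p ∈ Sfin x, moebius d * (if P p d then 1 else 0) := by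
    intro d hd
    rw [Finset.mem_Icc] at hd
    rw [← card_scale hx hd.1, Finset.card_filter]
    push_cast
    rw [Finset.mul_sum]
  rw [Finset.sum_congr rfl step1, Finset.sum_comm]
  have step2 : ∀ p ∈ Sfin x,
      ∑ d ∈ Finset.Icc 1 (Dx x), moebius d * (if P p d then 1 else 0)
        = if Mini p then 1 else 0 := by
    intro p hp
    have hD : Dok p := ((mem_Sfin_iff hx).mp hp).1
    have hset : (Finset.Icc 1 (Dx x)).filter (fun d => P p d) = (g p).divisors := by
      ext e
      rw [Finset.mem_filter, Finset.mem_Icc, Nat.mem_divisors]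
      constructor
      · rintro ⟨⟨he1, _⟩, hP⟩
        exact ⟨(P_iff_dvd_g hD he1).mp hP, by have := g_pos hD; omega⟩
      · rintro ⟨hdvd, hg0⟩
        have he0 : e ≠ 0 := by
          rintro rfl
          exact hg0 (Nat.eq_zero_of_zero_dvd hdvd)
        have hPe : P p e := P_dvd_mono hdvd (P_g hD)
        refine ⟨⟨by omega, ?_⟩, hPe⟩
        exact mem_Sfin_P_le hx hp hPe
    calc ∑ d ∈ Finset.Icc 1 (Dx x), moebius d * (if P p d then 1 else 0)
        = ∑ d ∈ (Finset.Icc 1 (Dx x)).filter (fun d => P p d), moebius d := by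
          rw [Finset.sum_filter]
          apply Finset.sum_congr rfl
          intro d _
          by_cases h : P p d <;> simp [h]
    _ = ∑ d ∈ (g p).divisors, moebius d := by rw [hset]
    _ = if g p = 1 then 1 else 0 := moebius_sum_divisors _
    _ = if Mini p then 1 else 0 := by
          have hiff := mini_iff_g_eq_one hD
          by_cases hM : Mini p
          · rw [if_pos hM, if_pos (hiff.mp hM)]
          · rw [if_neg hM, if_neg (fun h => hM (hiff.mpr h))]
  rw [Finset.sum_congr rfl step2]
  rw [Nfin, ← Finset.sum_filter]
  simp

/-! ### Limit assembly -/

open ArithmeticFunction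

def kap : ℝ := (2:ℝ) ^ ((4:ℝ)/3) * (3:ℝ) ^ (-(3:ℝ)/2)

def F (x : ℝ) (d : ℕ) : ℝ := (moebius d : ℝ) * (sc (x / (d:ℝ)^12) : ℝ) / x ^ ((5:ℝ)/6)

lemma sc_far_zero {x : ℝ} (hx : 0 ≤ x) {d : ℕ} (hd : 1 ≤ d) (hD : Dx x < d) :
    sc (x / (d:ℝ)^12) = 0 := by
  rw [← card_scale hx hd, Finset.card_eq_zero, Finset.eq_empty_iff_forall_notMem]
  intro p hp
  rw [Finset.mem_filter] at hp
  exact absurd (mem_Sfin_P_le hx hp.1 hp.2) (by omega)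

lemma tsum_rep {x : ℝ} (hx : 0 < x) :
    ((Nfin x).card : ℝ) / x ^ ((5:ℝ)/6) = ∑' d : ℕ, F x d := by
  rw [tsum_eq_sum (s := Finset.Icc 1 (Dx x)) ?_]
  · have h := main_identity hx.le
    have h' : ((Nfin x).card : ℝ)
        = ∑ d ∈ Finset.Icc 1 (Dx x), (moebius d : ℝ) * (sc (x / (d:ℝ)^12) : ℝ) := by
      have := congrArg (fun z : ℤ => (z : ℝ)) h
      push_cast at this
      exact this
    rw [h', Finset.sum_div]
    exact Finset.sum_congr rfl (fun d _ => rfl)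
  · intro d hd
    rw [Finset.mem_Icc] at hd
    push_neg at hd
    rcases Nat.eq_zero_or_pos d with rfl | hd1
    · simp [F]
    · rw [F, sc_far_zero hx.le hd1 (hd hd1)]
      simp

lemma dpow_rpow {d : ℕ} (hd : 1 ≤ d) : (((d:ℝ))^12) ^ ((5:ℝ)/6) = (d:ℝ)^10 := by
  have hd0 : (0:ℝ) ≤ (d:ℝ) := Nat.cast_nonneg d
  rw [← Real.rpow_natCast (d:ℝ) 12, ← Real.rpow_mul hd0]
  rw [show ((12:ℕ):ℝ) * ((5:ℝ)/6) = ((10:ℕ):ℝ) by norm_num, Real.rpow_natCast]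

lemma F_tendsto (d : ℕ) :
    Tendsto (fun x => F x d) atTop (nhds ((moebius d : ℝ) / (d:ℝ)^10 * kap)) := by
  rcases Nat.eq_zero_or_pos d with rfl | hd1
  · simp only [F, ArithmeticFunction.map_zero, Int.cast_zero, zero_mul, zero_div]
    simpa using tendsto_const_nhds
  · have hdp : (0:ℝ) < (d:ℝ)^12 := by positivity
    have h1 : Tendsto (fun x : ℝ => x / (d:ℝ)^12) atTop atTop :=
      Tendsto.atTop_div_const hdp tendsto_id
    have h2 := (tendsto_sc.comp h1).const_mul ((moebius d : ℝ) / (d:ℝ)^10)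
    unfold kap
    apply h2.congr'
    filter_upwards [eventually_gt_atTop (0:ℝ)] with x hx
    have hxe : (0:ℝ) < x ^ ((5:ℝ)/6) := Real.rpow_pos_of_pos hx _
    have hd10 : (0:ℝ) < (d:ℝ)^10 := by positivity
    have hyx : (x/(d:ℝ)^12) ^ ((5:ℝ)/6) = x^((5:ℝ)/6)/(d:ℝ)^10 := by
      rw [Real.div_rpow hx.le hdp.le, dpow_rpow hd1]
    simp only [Function.comp, F]
    rw [hyx]
    field_simp

lemma F_bound {x : ℝ} (hx : 0 < x) (d : ℕ) : ‖F x d‖ ≤ 15 / (d:ℝ)^10 := by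
  rcases Nat.eq_zero_or_pos d with rfl | hd1
  · simp [F]
  · have hdp : (0:ℝ) < (d:ℝ)^12 := by positivity
    have hd10 : (0:ℝ) < (d:ℝ)^10 := by positivity
    have hxe : (0:ℝ) < x ^ ((5:ℝ)/6) := Real.rpow_pos_of_pos hx _
    have hy : (0:ℝ) ≤ x / (d:ℝ)^12 := by positivity
    have hsc := sc_le_bound hy
    have hyx : (x/(d:ℝ)^12) ^ ((5:ℝ)/6) = x^((5:ℝ)/6)/(d:ℝ)^10 := by
      rw [Real.div_rpow hx.le hdp.le, dpow_rpow hd1]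
    rw [hyx] at hsc
    have hmu : |(moebius d : ℝ)| ≤ 1 := by
      have := abs_moebius_le_one (n := d)
      have h2 : |((moebius d : ℤ) : ℝ)| = ((|moebius d| : ℤ) : ℝ) := by
        rw [Int.cast_abs]
      rw [h2]
      exact_mod_cast this
    rw [F, Real.norm_eq_abs, abs_div, abs_mul,
      abs_of_nonneg (by positivity : (0:ℝ) ≤ ((sc (x / (d:ℝ)^12) : ℝ))),
      abs_of_nonneg hxe.le]
    calc |(moebius d : ℝ)| * (sc (x / (d:ℝ)^12) : ℝ) / x ^ ((5:ℝ)/6)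
        ≤ 1 * (15 * (x^((5:ℝ)/6)/(d:ℝ)^10)) / x ^ ((5:ℝ)/6) := by
          gcongr
    _ = 15 / (d:ℝ)^10 := by field_simp

lemma summable_bound : Summable (fun d : ℕ => 15 / (d:ℝ)^10) := by
  have h : Summable (fun d : ℕ => 1 / (d:ℝ)^10) := Real.summable_one_div_nat_pow.mpr (by norm_num)
  exact (h.mul_left 15).congr (fun d => by ring)

def Mconst : ℝ := ∑' d : ℕ, (moebius d : ℝ) / (d:ℝ)^10
def Zconst : ℝ := ∑' m : ℕ, (1:ℝ) / ((m:ℝ) + 1)^10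

lemma tendsto_F_tsum :
    Tendsto (fun x : ℝ => ∑' d : ℕ, F x d) atTop (nhds (Mconst * kap)) := by
  have h := tendsto_tsum_of_dominated_convergence (𝓕 := atTop) (f := fun x d => F x d)
    (g := fun d => (moebius d : ℝ) / (d:ℝ)^10 * kap)
    (bound := fun d => 15 / (d:ℝ)^10) summable_bound F_tendsto ?_
  · have e : ∑' d : ℕ, (moebius d : ℝ) / (d:ℝ)^10 * kap = Mconst * kap := by
      rw [tsum_mul_right, Mconst]
    rw [e] at h
    exact h
  · filter_upwards [eventually_gt_atTop (0:ℝ)] with x hx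
    exact F_bound hx

lemma summable_Z : Summable (fun m : ℕ => (1:ℝ) / ((m:ℝ) + 1)^10) := by
  have h : Summable (fun d : ℕ => 1 / (d:ℝ)^10) := Real.summable_one_div_nat_pow.mpr (by norm_num)
  have := (summable_nat_add_iff 1).mpr h
  apply this.congr
  intro m
  push_cast
  norm_num

lemma Z_pos : 0 < Zconst := by
  refine Summable.tsum_pos summable_Z (fun m => by positivity) 0 (by norm_num)

lemma summable_M : Summable (fun d : ℕ => (moebius d : ℝ) / (d:ℝ)^10) := by
  apply Summable.of_norm_bounded (Real.summable_one_div_nat_pow.mpr (by norm_num : 1 < 10))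
  intro d
  rcases Nat.eq_zero_or_pos d with rfl | hd1
  · simp
  · have hd10 : (0:ℝ) < (d:ℝ)^10 := by positivity
    rw [Real.norm_eq_abs, abs_div, abs_of_nonneg hd10.le]
    apply div_le_div_of_nonneg_right ?_ hd10.le
    have h2 : |((moebius d : ℤ) : ℝ)| = ((|moebius d| : ℤ) : ℝ) := by
      rw [Int.cast_abs]
    rw [h2]
    exact_mod_cast abs_moebius_le_one (n := d)

lemma cpow_ten (z : ℂ) : z ^ (10:ℂ) = z ^ (10:ℕ) := by
  rw [show (10:ℂ) = ((10:ℕ):ℂ) by norm_num, Complex.cpow_natCast]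

lemma hZC : ((Zconst : ℝ) : ℂ) = LSeries (fun n : ℕ => ((zeta n : ℕ) : ℂ)) 10 := by
  have h10 : (1:ℝ) < (10:ℂ).re := by norm_num
  rw [LSeries_zeta_eq_riemannZeta h10, zeta_eq_tsum_one_div_nat_add_one_cpow h10,
    Zconst, Complex.ofReal_tsum]
  apply tsum_congr
  intro m
  rw [cpow_ten ((m:ℂ)+1)]
  push_cast
  norm_num

lemma hMC : ((Mconst : ℝ) : ℂ) = LSeries (fun n : ℕ => ((moebius n : ℤ) : ℂ)) 10 := by
  rw [Mconst, Complex.ofReal_tsum, LSeries]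
  apply tsum_congr
  intro d
  rcases Nat.eq_zero_or_pos d with rfl | hd1
  · simp [LSeries.term_zero]
  · rw [LSeries.term_of_ne_zero (by omega : d ≠ 0), cpow_ten ((d:ℂ))]
    push_cast
    norm_num

lemma MZ_eq_one : Mconst * Zconst = 1 := by
  have h10 : (1:ℝ) < (10:ℂ).re := by norm_num
  have hzeta := LSeries_zeta_mul_Lseries_moebius (s := (10:ℂ)) h10
  have hc : ((Zconst * Mconst : ℝ) : ℂ) = 1 := by
    rw [Complex.ofReal_mul, hZC, hMC]
    exact hzeta
  have : Zconst * Mconst = 1 := by exact_mod_cast hc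
  linarith [this]

lemma final_value : Mconst * kap
    = (2:ℝ)^((4:ℝ)/3) * (3:ℝ)^(-(3:ℝ)/2) / ∑' m : ℕ, (1:ℝ)/((m:ℝ)+1)^10 := by
  show Mconst * kap = kap / Zconst
  rw [eq_div_iff Z_pos.ne']
  calc Mconst * kap * Zconst = kap * (Mconst * Zconst) := by ring
  _ = kap := by rw [MZ_eq_one]; ring

lemma ncard_Nset {x : ℝ} (hx : 0 ≤ x) : (Nset x).ncard = (Nfin x).card := by
  have h : Nset x = ↑(Nfin x) := by
    ext p
    simp only [Nset, Set.mem_setOf_eq, Finset.coe_filter, Nfin, Finset.mem_coe,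
      Finset.mem_filter, mem_Sfin_iff hx]
    tauto
  rw [h, Set.ncard_coe_finset]

end

end ECAux

open Filter

/-- the number of minimal Weierstrass equations `y² = x³ + Ax + B`
(with `A,B ∈ ℤ`, `4A³+27B² ≠ 0`, no prime `p` with `p⁴ ∣ A` and `p⁶ ∣ B`) of
height `max(|4A³|,|27B²|) ≤ H` is asymptotic to `κ H^{5/6}` with
`κ = 2^{4/3} 3^{-3/2} / ζ(10)`. -/
theorem count_elliptic_curves_asymptotic :
    Tendsto
      (fun H : ℝ =>
        (Set.ncard {p : ℤ × ℤ |
            4 * p.1 ^ 3 + 27 * p.2 ^ 2 ≠ 0 ∧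
            (¬∃ q : ℕ, q.Prime ∧ (q : ℤ) ^ 4 ∣ p.1 ∧ (q : ℤ) ^ 6 ∣ p.2) ∧
            max |4 * (p.1 : ℝ) ^ 3| |27 * (p.2 : ℝ) ^ 2| ≤ H} : ℝ) /
          H ^ ((5 : ℝ) / 6))
      atTop
      (nhds ((2 : ℝ) ^ ((4 : ℝ) / 3) * (3 : ℝ) ^ (-(3 : ℝ) / 2) /
        ∑' m : ℕ, (1 : ℝ) / ((m : ℝ) + 1) ^ 10)) := by
  have h1 : Tendsto (fun x : ℝ => ((ECAux.Nfin x).card : ℝ) / x ^ ((5:ℝ)/6)) atTop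
      (nhds (ECAux.Mconst * ECAux.kap)) := by
    apply ECAux.tendsto_F_tsum.congr'
    filter_upwards [eventually_gt_atTop (0:ℝ)] with x hx
    exact (ECAux.tsum_rep hx).symm
  rw [← ECAux.final_value]
  apply h1.congr'
  filter_upwards [eventually_ge_atTop (0:ℝ)] with H hH
  have hset : {p : ℤ × ℤ |
      4 * p.1 ^ 3 + 27 * p.2 ^ 2 ≠ 0 ∧
      (¬∃ q : ℕ, q.Prime ∧ (q : ℤ) ^ 4 ∣ p.1 ∧ (q : ℤ) ^ 6 ∣ p.2) ∧
      max |4 * (p.1 : ℝ) ^ 3| |27 * (p.2 : ℝ) ^ 2| ≤ H} = ECAux.Nset H := rfl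
  rw [hset, ECAux.ncard_Nset hH]
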